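/- arXiv:1904.12563 — 2 statements merged into one kernel-verified Lean document; each statement's English description precedes it below -/
import Mathlib

section
/- Let S/S_0 be a cyclic Galois extension of commutative rings of degree m with Galois group generated by σ, and let d ∈ S^×. The nonassociative cyclic algebra (S/S_0, σ, d) = S[t;σ]/S[t;σ](t^m − d) is associative if and only if d ∈ S_0. -/
open Finset

/-- The multiplication of the Petit algebra `(S/S₀,σ,d) = S[t;σ]/S[t;σ](t^m − d)` on
coefficient vectors `Fin m → S`. -/
def pmul {S : Type*} [Ring S] (σ : S ≃+* S) (d : S) (m : ℕ) (a b : Fin m → S) :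
    Fin m → S := fun k =>
  ∑ i : Fin m, ∑ j : Fin m,
    if (i : ℕ) + j = k then a i * (σ ^ (i : ℕ)) (b j)
    else if (i : ℕ) + j = (k : ℕ) + m then a i * (σ ^ (i : ℕ)) (b j) * (σ ^ (k : ℕ)) d
    else 0

/-- `S/S₀` is a cyclic Galois extension of commutative rings of degree `m` with Galois group
generated by `σ` (where `S₀ = Fix(σ)`): `σ^m = 1` and for each `j < m` there are Galois
coordinates `xₗ, yₗ` with `∑ xₗ σ^i(yₗ) = δ_{ij}` for `i < m`. -/
def CyclicGaloisExtension {S : Type*} [CommRing S] (σ : S ≃+* S) (m : ℕ) : Prop :=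
  0 < m ∧ σ ^ m = 1 ∧
    ∀ j < m, ∃ (n : ℕ) (x y : Fin n → S),
      ∀ i < m, (∑ l, x l * (σ ^ i) (y l)) = if i = j then 1 else 0

namespace PetitAux
variable {S : Type*} [CommRing S]

def e (d : S) (m n : ℕ) (k : Fin m) : S :=
  if n = (k : ℕ) then 1 else if n = (k : ℕ) + m then d else 0

def E (d : S) (m n : ℕ) (k : Fin m) : S :=
  if n = (k : ℕ) then 1 else if n = (k : ℕ) + m then d
  else if n = (k : ℕ) + 2 * m then d * d else 0

lemma sig_fix_pow (σ : S ≃+* S) {d : S} (h : σ d = d) (n : ℕ) : (σ ^ n) d = d := by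
  induction n with
  | zero => rfl
  | succ n ih => rw [pow_succ]; show (σ ^ n) (σ d) = d; rw [h, ih]

lemma sig_comp (σ : S ≃+* S) (i j : ℕ) (x : S) :
    (σ ^ i) ((σ ^ j) x) = (σ ^ (i + j)) x := by
  rw [pow_add]; rfl

lemma sig_e (σ : S ≃+* S) {d : S} (h : σ d = d) (i : ℕ) (m n : ℕ) (k : Fin m) :
    (σ ^ i) (e d m n k) = e d m n k := by
  unfold e; split_ifs <;> simp [sig_fix_pow σ h i]

lemma pmul_eq (σ : S ≃+* S) {d : S} (h : σ d = d) (m : ℕ) (a b : Fin m → S) (k : Fin m) :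
    pmul σ d m a b k
      = ∑ i : Fin m, ∑ j : Fin m, a i * (σ ^ (i : ℕ)) (b j) * e d m ((i : ℕ) + j) k := by
  unfold pmul e
  refine Finset.sum_congr rfl fun i _ => Finset.sum_congr rfl fun j _ => ?_
  split_ifs with h1 h2 <;> simp [sig_fix_pow σ h]

lemma keyL (σ : S ≃+* S) {d : S} (m : ℕ) (hm0 : 0 < m) (hσm : σ ^ m = 1)
    (i j l k : Fin m) (x : S) :
    (∑ p : Fin m, e d m ((i : ℕ) + j) p * (σ ^ (p : ℕ)) x * e d m ((p : ℕ) + l) k)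
      = (σ ^ ((i : ℕ) + j)) x * E d m ((i : ℕ) + j + l) k := by
  have hi := i.isLt; have hj := j.isLt; have hl := l.isLt; have hk := k.isLt
  by_cases hij : (i : ℕ) + j < m
  · rw [Finset.sum_eq_single ⟨(i : ℕ) + j, hij⟩]
    · have h1 : e d m ((i : ℕ) + j) ⟨(i : ℕ) + j, hij⟩ = 1 := by simp [e]
      rw [h1, one_mul]
      congr 1
      unfold e E
      (try simp only [Fin.val_mk])
      split_ifs <;> first | rfl | omega
    · intro p _ hp
      have hp' : (p : ℕ) ≠ (i : ℕ) + j := fun hc => hp (Fin.ext hc)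
      have h0 : e d m ((i : ℕ) + j) p = 0 := by
        unfold e; (try simp only [Fin.val_mk]); split_ifs <;> first | omega | rfl
      rw [h0, zero_mul, zero_mul]
    · intro hc; exact absurd (Finset.mem_univ _) hc
  · have hij2 : (i : ℕ) + j - m < m := by omega
    rw [Finset.sum_eq_single ⟨(i : ℕ) + j - m, hij2⟩]
    · have h1 : e d m ((i : ℕ) + j) ⟨(i : ℕ) + j - m, hij2⟩ = d := by
        unfold e; (try simp only [Fin.val_mk]); split_ifs <;> first | omega | rfl
      have h2 : (σ ^ ((i : ℕ) + j)) x = (σ ^ ((i : ℕ) + j - m)) x := by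
        conv_lhs => rw [show (i : ℕ) + j = ((i : ℕ) + j - m) + m from by omega]
        rw [pow_add, hσm, mul_one]
      rw [h1, h2]
      unfold e E
      (try simp only [Fin.val_mk])
      split_ifs <;> first | omega | ring
    · intro p _ hp
      have hp' : (p : ℕ) ≠ (i : ℕ) + j - m := fun hc => hp (Fin.ext hc)
      have h0 : e d m ((i : ℕ) + j) p = 0 := by
        unfold e; (try simp only [Fin.val_mk]); split_ifs <;> first | omega | rfl
      rw [h0, zero_mul, zero_mul]
    · intro hc; exact absurd (Finset.mem_univ _) hc

lemma keyR (σ : S ≃+* S) {d : S} (m : ℕ) (hm0 : 0 < m)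
    (i j l k : Fin m) (x : S) :
    (∑ q : Fin m, (σ ^ ((i : ℕ) + j)) x * e d m ((j : ℕ) + l) q * e d m ((i : ℕ) + q) k)
      = (σ ^ ((i : ℕ) + j)) x * E d m ((i : ℕ) + j + l) k := by
  have hi := i.isLt; have hj := j.isLt; have hl := l.isLt; have hk := k.isLt
  by_cases hjl : (j : ℕ) + l < m
  · rw [Finset.sum_eq_single ⟨(j : ℕ) + l, hjl⟩]
    · have h1 : e d m ((j : ℕ) + l) ⟨(j : ℕ) + l, hjl⟩ = 1 := by simp [e]
      rw [h1, mul_one]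
      congr 1
      unfold e E
      (try simp only [Fin.val_mk])
      split_ifs <;> first | rfl | omega
    · intro q _ hq
      have hq' : (q : ℕ) ≠ (j : ℕ) + l := fun hc => hq (Fin.ext hc)
      have h0 : e d m ((j : ℕ) + l) q = 0 := by
        unfold e; (try simp only [Fin.val_mk]); split_ifs <;> first | omega | rfl
      rw [h0, mul_zero, zero_mul]
    · intro hc; exact absurd (Finset.mem_univ _) hc
  · have hjl2 : (j : ℕ) + l - m < m := by omega
    rw [Finset.sum_eq_single ⟨(j : ℕ) + l - m, hjl2⟩]
    · have h1 : e d m ((j : ℕ) + l) ⟨(j : ℕ) + l - m, hjl2⟩ = d := by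
        unfold e; (try simp only [Fin.val_mk]); split_ifs <;> first | omega | rfl
      rw [h1]
      unfold e E
      (try simp only [Fin.val_mk])
      split_ifs <;> first | omega | ring
    · intro q _ hq
      have hq' : (q : ℕ) ≠ (j : ℕ) + l - m := fun hc => hq (Fin.ext hc)
      have h0 : e d m ((j : ℕ) + l) q = 0 := by
        unfold e; (try simp only [Fin.val_mk]); split_ifs <;> first | omega | rfl
      rw [h0, mul_zero, zero_mul]
    · intro hc; exact absurd (Finset.mem_univ _) hc

lemma sum_comm3 {M : Type*} [AddCommMonoid M] {m : ℕ}
    (f : Fin m → Fin m → Fin m → M) :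
    ∑ q : Fin m, ∑ j : Fin m, ∑ l : Fin m, f q j l
      = ∑ j : Fin m, ∑ l : Fin m, ∑ q : Fin m, f q j l := by
  calc ∑ q : Fin m, ∑ j : Fin m, ∑ l : Fin m, f q j l
      = ∑ j : Fin m, ∑ q : Fin m, ∑ l : Fin m, f q j l := Finset.sum_comm
    _ = ∑ j : Fin m, ∑ l : Fin m, ∑ q : Fin m, f q j l :=
        Finset.sum_congr rfl fun j _ => Finset.sum_comm

lemma sum_comm4 {M : Type*} [AddCommMonoid M] {m : ℕ}
    (f : Fin m → Fin m → Fin m → Fin m → M) :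
    ∑ p : Fin m, ∑ l : Fin m, ∑ i : Fin m, ∑ j : Fin m, f p l i j
      = ∑ i : Fin m, ∑ j : Fin m, ∑ l : Fin m, ∑ p : Fin m, f p l i j := by
  calc ∑ p : Fin m, ∑ l : Fin m, ∑ i : Fin m, ∑ j : Fin m, f p l i j
      = ∑ p : Fin m, ∑ i : Fin m, ∑ l : Fin m, ∑ j : Fin m, f p l i j :=
        Finset.sum_congr rfl fun p _ => Finset.sum_comm
    _ = ∑ i : Fin m, ∑ p : Fin m, ∑ l : Fin m, ∑ j : Fin m, f p l i j := Finset.sum_comm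
    _ = ∑ i : Fin m, ∑ p : Fin m, ∑ j : Fin m, ∑ l : Fin m, f p l i j :=
        Finset.sum_congr rfl fun i _ => Finset.sum_congr rfl fun p _ => Finset.sum_comm
    _ = ∑ i : Fin m, ∑ j : Fin m, ∑ p : Fin m, ∑ l : Fin m, f p l i j :=
        Finset.sum_congr rfl fun i _ => Finset.sum_comm
    _ = ∑ i : Fin m, ∑ j : Fin m, ∑ l : Fin m, ∑ p : Fin m, f p l i j :=
        Finset.sum_congr rfl fun i _ => Finset.sum_congr rfl fun j _ => Finset.sum_comm

lemma pmul_single (σ : S ≃+* S) (d : S) (m : ℕ) (i j : Fin m) (s u : S) :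
    pmul σ d m (Pi.single i s) (Pi.single j u) = fun (k : Fin m) =>
      if (i : ℕ) + j = (k : ℕ) then s * (σ ^ (i : ℕ)) u
      else if (i : ℕ) + j = (k : ℕ) + m then s * (σ ^ (i : ℕ)) u * (σ ^ (k : ℕ)) d
      else 0 := by
  funext k
  unfold pmul
  rw [Finset.sum_eq_single i]
  · rw [Finset.sum_eq_single j]
    · simp
    · intro j' _ hj'
      rw [Pi.single_eq_of_ne hj']
      split_ifs <;> simp
    · intro hc; exact absurd (Finset.mem_univ _) hc
  · intro i' _ hi'
    rw [Finset.sum_eq_zero]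
    intro j' _
    rw [Pi.single_eq_of_ne hi']
    split_ifs <;> simp
  · intro hc; exact absurd (Finset.mem_univ _) hc

end PetitAux

open PetitAux in
/-- Let `S/S₀` be a cyclic Galois extension of commutative rings of degree `m`
with Galois group generated by `σ`, and `d ∈ Sˣ`.  The nonassociative cyclic algebra
`(S/S₀,σ,d) = S[t;σ]/S[t;σ](t^m − d)` is associative if and only if `d ∈ S₀ = Fix(σ)`. -/
theorem cyclic_petit_associative_iff {S : Type*} [CommRing S]
    (σ : S ≃+* S) (m : ℕ) (hGal : CyclicGaloisExtension σ m)
    (d : S) (hd : IsUnit d) :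
    (∀ a b c : Fin m → S, pmul σ d m (pmul σ d m a b) c = pmul σ d m a (pmul σ d m b c))
      ↔ σ d = d := by
  obtain ⟨hm0, hσm, -⟩ := hGal
  constructor
  · intro h
    rcases Nat.lt_or_ge 1 m with hm2 | hm1
    · -- m ≥ 2
      have hab : pmul σ d m (Pi.single (⟨1, hm2⟩ : Fin m) (1 : S))
            (Pi.single (⟨m - 1, by omega⟩ : Fin m) (1 : S))
          = Pi.single (⟨0, hm0⟩ : Fin m) d := by
        rw [pmul_single]
        funext k
        rw [Pi.single_apply]
        have hkm := k.isLt
        by_cases hk : k = (⟨0, hm0⟩ : Fin m)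
        · have hkv : (k : ℕ) = 0 := by rw [hk]
          rw [if_pos hk, if_neg (by simp only [Fin.val_mk]; omega),
            if_pos (by simp only [Fin.val_mk]; omega), hkv]
          simp only [map_one, one_mul, pow_zero]
          rfl
        · have hkv : (k : ℕ) ≠ 0 := fun hc => hk (Fin.ext hc)
          rw [if_neg hk, if_neg (by simp only [Fin.val_mk]; omega),
            if_neg (by simp only [Fin.val_mk]; omega)]
      have hbc : pmul σ d m (Pi.single (⟨m - 1, by omega⟩ : Fin m) (1 : S))
            (Pi.single (⟨1, hm2⟩ : Fin m) (1 : S))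
          = Pi.single (⟨0, hm0⟩ : Fin m) d := by
        rw [pmul_single]
        funext k
        rw [Pi.single_apply]
        have hkm := k.isLt
        by_cases hk : k = (⟨0, hm0⟩ : Fin m)
        · have hkv : (k : ℕ) = 0 := by rw [hk]
          rw [if_pos hk, if_neg (by simp only [Fin.val_mk]; omega),
            if_pos (by simp only [Fin.val_mk]; omega), hkv]
          simp only [map_one, one_mul, pow_zero]
          rfl
        · have hkv : (k : ℕ) ≠ 0 := fun hc => hk (Fin.ext hc)
          rw [if_neg hk, if_neg (by simp only [Fin.val_mk]; omega),
            if_neg (by simp only [Fin.val_mk]; omega)]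
      have h' := h (Pi.single (⟨1, hm2⟩ : Fin m) 1)
        (Pi.single (⟨m - 1, by omega⟩ : Fin m) 1) (Pi.single (⟨1, hm2⟩ : Fin m) 1)
      rw [hab, hbc, pmul_single, pmul_single] at h'
      have h1 := congrFun h' (⟨1, hm2⟩ : Fin m)
      simp only [Fin.val_mk] at h1
      simpa using h1.symm
    · -- m = 1
      have hm : m = 1 := by omega
      subst hm
      have hσ1 : σ = 1 := by rw [← pow_one σ]; exact hσm
      rw [hσ1]; rfl
  · intro hσd a b c
    funext k
    rw [pmul_eq σ hσd, pmul_eq σ hσd]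
    simp_rw [pmul_eq σ hσd]
    have hLHS : (∑ p : Fin m, ∑ l : Fin m,
        (∑ i : Fin m, ∑ j : Fin m, a i * (σ ^ (i : ℕ)) (b j) * e d m ((i : ℕ) + j) p)
          * (σ ^ (p : ℕ)) (c l) * e d m ((p : ℕ) + l) k)
        = ∑ i : Fin m, ∑ j : Fin m, ∑ l : Fin m,
            a i * (σ ^ (i : ℕ)) (b j)
              * ((σ ^ ((i : ℕ) + j)) (c l) * E d m ((i : ℕ) + j + l) k) := by
      simp only [Finset.sum_mul]
      rw [sum_comm4 (fun p l i j => a i * (σ ^ (i : ℕ)) (b j) * e d m ((i : ℕ) + j) p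
        * (σ ^ (p : ℕ)) (c l) * e d m ((p : ℕ) + l) k)]
      refine Finset.sum_congr rfl fun i _ => Finset.sum_congr rfl fun j _ =>
        Finset.sum_congr rfl fun l _ => ?_
      rw [← keyL σ m hm0 hσm i j l k (c l), Finset.mul_sum]
      exact Finset.sum_congr rfl fun p _ => by ring
    have hRHS : (∑ i : Fin m, ∑ q : Fin m,
        a i * (σ ^ (i : ℕ)) (∑ j : Fin m, ∑ l : Fin m,
          b j * (σ ^ (j : ℕ)) (c l) * e d m ((j : ℕ) + l) q) * e d m ((i : ℕ) + q) k)
        = ∑ i : Fin m, ∑ j : Fin m, ∑ l : Fin m,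
            a i * (σ ^ (i : ℕ)) (b j)
              * ((σ ^ ((i : ℕ) + j)) (c l) * E d m ((i : ℕ) + j + l) k) := by
      have step1 : (∑ i : Fin m, ∑ q : Fin m,
          a i * (σ ^ (i : ℕ)) (∑ j : Fin m, ∑ l : Fin m,
            b j * (σ ^ (j : ℕ)) (c l) * e d m ((j : ℕ) + l) q) * e d m ((i : ℕ) + q) k)
          = ∑ i : Fin m, ∑ q : Fin m, ∑ j : Fin m, ∑ l : Fin m,
              a i * (σ ^ (i : ℕ)) (b j)
                * ((σ ^ ((i : ℕ) + j)) (c l) * e d m ((j : ℕ) + l) q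
                    * e d m ((i : ℕ) + q) k) := by
        refine Finset.sum_congr rfl fun i _ => Finset.sum_congr rfl fun q _ => ?_
        simp only [map_sum, map_mul, sig_comp, sig_e σ hσd, Finset.sum_mul, Finset.mul_sum]
        exact Finset.sum_congr rfl fun j _ => Finset.sum_congr rfl fun l _ => by ring
      rw [step1]
      refine Finset.sum_congr rfl fun i _ => ?_
      rw [sum_comm3 (fun q j l => a i * (σ ^ (i : ℕ)) (b j)
        * ((σ ^ ((i : ℕ) + j)) (c l) * e d m ((j : ℕ) + l) q * e d m ((i : ℕ) + q) k))]
      refine Finset.sum_congr rfl fun j _ => Finset.sum_congr rfl fun l _ => ?_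
      rw [← keyR σ m hm0 i j l k (c l), Finset.mul_sum]
    exact hLHS.trans hRHS.symm
end

section
/- Let S/S_0 be a cyclic Galois extension of commutative rings of degree m with Galois group generated by σ, d ∈ S^×, and let s be the smallest positive integer with d ∈ Fix(σ^s). If s divides m, say m = rs, then the S_0-submodule S ⊕ St^s ⊕ ⋯ ⊕ St^{(r−1)s} is contained in the right nucleus of the nonassociative cyclic algebra (S/S_0, σ, d). -/
open Finset

section
variable {S : Type*} [CommRing S]


lemma sig_comp (σ : S ≃+* S) (n p : ℕ) (y : S) : (σ^n) ((σ^p) y) = (σ^(n+p)) y := by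
  rw [pow_add]; rfl

lemma sig_addm (σ : S ≃+* S) {m : ℕ} (h : σ^m = 1) (e : ℕ) (y : S) :
    (σ^(e+m)) y = (σ^e) y := by rw [pow_add, h, mul_one]

lemma sig_subm (σ : S ≃+* S) {m : ℕ} (hσm : σ^m = 1) {e : ℕ} (he : m ≤ e) (y : S) :
    (σ^e) y = (σ^(e-m)) y := by
  conv_lhs => rw [show e = (e-m)+m by omega]
  exact sig_addm σ hσm _ y

lemma sig_d (σ : S ≃+* S) {s : ℕ} {d : S} (h : (σ^s) d = d) {e : ℕ} (he : s ∣ e) :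
    (σ^e) d = d := by
  obtain ⟨t, rfl⟩ := he
  induction t with
  | zero => rfl
  | succ n ih => rw [show s*(n+1) = s*n + s by ring, ← sig_comp, h, ih]

lemma sig_d_addl (σ : S ≃+* S) {s : ℕ} {d : S} (hds : (σ^s) d = d) {l : ℕ}
    (hsl : s ∣ l) (e : ℕ) : (σ^(e+l)) d = (σ^e) d := by
  rw [← sig_comp, sig_d σ hds hsl]

set_option maxHeartbeats 2000000 in
lemma core (σ : S ≃+* S) {m : ℕ} (hσm : σ^m = 1) (d : S) {s : ℕ} (hds : (σ^s) d = d)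
    (i j l k : ℕ) (hi : i < m) (hj : j < m) (hl : l < m) (hk : k < m) (hsl : s ∣ l)
    (A B X : S) :
    (if i + j = (i+j) % m then A * (σ^i) B
     else if i + j = (i+j) % m + m then A * (σ^i) B * (σ^((i+j)%m)) d else 0) *
    (if (i+j) % m + l = k then (σ^((i+j)%m)) X
     else if (i+j)%m + l = k + m then (σ^((i+j)%m)) X * (σ^k) d else 0)
    =
    (if i + (j+l) % m = k then A else if i + (j+l)%m = k + m then A * (σ^k) d else 0) *
    (σ^i) (if j + l = (j+l)%m then B * (σ^j) X
           else if j + l = (j+l)%m + m then B * (σ^j) X * (σ^((j+l)%m)) d else 0) := by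
  have hm0 : 0 < m := lt_of_le_of_lt (Nat.zero_le _) hi
  rcases Nat.lt_or_ge (i+j) m with hu|hu <;> rcases Nat.lt_or_ge (j+l) m with hv|hv
  · rw [Nat.mod_eq_of_lt hu, Nat.mod_eq_of_lt hv]
    split_ifs <;> try omega
    all_goals simp only [map_mul, map_zero, sig_comp, mul_zero, zero_mul]
    all_goals ring
  · rw [Nat.mod_eq_of_lt hu, Nat.mod_eq_sub_mod hv, Nat.mod_eq_of_lt (by omega)]
    split_ifs <;> try omega
    all_goals simp only [map_mul, map_zero, sig_comp, mul_zero, zero_mul]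
    all_goals try ring
    · rename_i h3 h4 h5 h6
      rw [← h4] <;> ring
  · rw [Nat.mod_eq_sub_mod hu, Nat.mod_eq_of_lt (show i+j-m < m by omega),
      Nat.mod_eq_of_lt hv]
    split_ifs <;> try omega
    all_goals simp only [map_mul, map_zero, sig_comp, mul_zero, zero_mul]
    all_goals try ring
    · rename_i hA hB hC hD hE
      have e1 : (σ^(k:ℕ)) d = (σ^(i+j-m)) d := by
        rw [← hB, sig_d_addl σ hds hsl]
      have e2 : (σ^(i+j)) X = (σ^(i+j-m)) X := sig_subm σ hσm hu X
      rw [e1, e2] <;> ring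
  · rw [Nat.mod_eq_sub_mod hu, Nat.mod_eq_of_lt (show i+j-m < m by omega),
      Nat.mod_eq_sub_mod hv, Nat.mod_eq_of_lt (show j+l-m < m by omega)]
    split_ifs <;> try omega
    all_goals simp only [map_mul, map_zero, sig_comp, mul_zero, zero_mul]
    all_goals try ring
    · rename_i hA hB hC hD hE
      have e1 : (σ^(i+(j+l-m))) d = (σ^(i+j-m)) d := by
        rw [hC, ← hB, sig_d_addl σ hds hsl]
      have e2 : (σ^(i+j)) X = (σ^(i+j-m)) X := sig_subm σ hσm hu X
      rw [e1, e2] <;> ring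
    · rename_i hA hB hC hD hE hF hG
      have e1 : (σ^(i+(j+l-m))) d = (σ^(k:ℕ)) d := by
        rw [hE]; exact sig_addm σ hσm k d
      have e2 : (σ^(i+j-m)) d = (σ^(k:ℕ)) d := by
        rw [← sig_d_addl σ hds hsl (i+j-m), hC]
        exact sig_addm σ hσm k d
      have e3 : (σ^(i+j)) X = (σ^(i+j-m)) X := sig_subm σ hσm hu X
      rw [e1, e2, e3] <;> ring


lemma sum_collapse' {m : ℕ} (f : Fin m → S) (n : ℕ) (hn : n < m)
    (h : ∀ p : Fin m, (p : ℕ) ≠ n → f p = 0) : ∑ p, f p = f ⟨n, hn⟩ :=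
  Finset.sum_eq_single ⟨n, hn⟩ (fun p _ hp => h p (fun he => hp (Fin.ext he)))
    (fun h' => absurd (Finset.mem_univ _) h')

lemma lhs_expand (σ : S ≃+* S) (d : S) {m : ℕ} (hm0 : 0 < m) (a b x : Fin m → S)
    (k : Fin m) :
    pmul σ d m (pmul σ d m a b) x k =
    ∑ i : Fin m, ∑ j : Fin m, ∑ l : Fin m,
      (if (i:ℕ) + j = ((i:ℕ)+j) % m then a i * (σ^(i:ℕ)) (b j)
       else if (i:ℕ)+j = ((i:ℕ)+j)%m + m then
         a i * (σ^(i:ℕ)) (b j) * (σ^(((i:ℕ)+j)%m)) d else 0) *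
      (if ((i:ℕ)+j)%m + l = (k:ℕ) then (σ^(((i:ℕ)+j)%m)) (x l)
       else if ((i:ℕ)+j)%m + l = (k:ℕ) + m then
         (σ^(((i:ℕ)+j)%m)) (x l) * (σ^(k:ℕ)) d else 0) := by
  calc pmul σ d m (pmul σ d m a b) x k
      = ∑ p : Fin m, pmul σ d m a b p *
          ∑ l : Fin m, (if (p:ℕ)+l = (k:ℕ) then (σ^(p:ℕ)) (x l)
            else if (p:ℕ)+l = (k:ℕ)+m then (σ^(p:ℕ)) (x l) * (σ^(k:ℕ)) d else 0) := by
        refine Finset.sum_congr rfl fun p _ => ?_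
        rw [Finset.mul_sum]
        refine Finset.sum_congr rfl fun l _ => ?_
        split_ifs <;> ring
    _ = ∑ p : Fin m, ∑ i : Fin m, ∑ j : Fin m,
          ((if (i:ℕ) + j = (p:ℕ) then a i * (σ^(i:ℕ)) (b j)
            else if (i:ℕ)+j = (p:ℕ) + m then
              a i * (σ^(i:ℕ)) (b j) * (σ^(p:ℕ)) d else 0) *
           ∑ l : Fin m, (if (p:ℕ)+l = (k:ℕ) then (σ^(p:ℕ)) (x l)
            else if (p:ℕ)+l = (k:ℕ)+m then (σ^(p:ℕ)) (x l) * (σ^(k:ℕ)) d else 0)) := by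
        refine Finset.sum_congr rfl fun p _ => ?_
        rw [show pmul σ d m a b p = ∑ i : Fin m, ∑ j : Fin m,
          (if (i:ℕ) + j = (p:ℕ) then a i * (σ^(i:ℕ)) (b j)
            else if (i:ℕ)+j = (p:ℕ) + m then
              a i * (σ^(i:ℕ)) (b j) * (σ^(p:ℕ)) d else 0) from rfl]
        rw [Finset.sum_mul]
        exact Finset.sum_congr rfl fun i _ => Finset.sum_mul ..
    _ = ∑ i : Fin m, ∑ j : Fin m, ∑ p : Fin m,
          ((if (i:ℕ) + j = (p:ℕ) then a i * (σ^(i:ℕ)) (b j)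
            else if (i:ℕ)+j = (p:ℕ) + m then
              a i * (σ^(i:ℕ)) (b j) * (σ^(p:ℕ)) d else 0) *
           ∑ l : Fin m, (if (p:ℕ)+l = (k:ℕ) then (σ^(p:ℕ)) (x l)
            else if (p:ℕ)+l = (k:ℕ)+m then (σ^(p:ℕ)) (x l) * (σ^(k:ℕ)) d else 0)) := by
        rw [Finset.sum_comm]
        exact Finset.sum_congr rfl fun i _ => Finset.sum_comm
    _ = _ := by
        refine Finset.sum_congr rfl fun i _ => Finset.sum_congr rfl fun j _ => ?_
        rw [sum_collapse' _ (((i:ℕ)+(j:ℕ)) % m) (Nat.mod_lt _ hm0) ?_]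
        · rw [Finset.mul_sum]
        · intro p hp
          split_ifs with h1 h2
          · exact absurd (by rw [← h1, Nat.mod_eq_of_lt (h1 ▸ p.isLt)]) (Ne.symm hp)
          · exact absurd (by rw [h2, Nat.add_mod_right, Nat.mod_eq_of_lt p.isLt])
              (Ne.symm hp)
          · exact zero_mul _

lemma rhs_expand (σ : S ≃+* S) (d : S) {m : ℕ} (hm0 : 0 < m) (a b x : Fin m → S)
    (k : Fin m) :
    pmul σ d m a (pmul σ d m b x) k =
    ∑ i : Fin m, ∑ j : Fin m, ∑ l : Fin m,
      (if (i:ℕ) + ((j:ℕ)+l) % m = (k:ℕ) then a i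
       else if (i:ℕ) + ((j:ℕ)+l)%m = (k:ℕ) + m then a i * (σ^(k:ℕ)) d else 0) *
      (σ^(i:ℕ)) (if (j:ℕ) + l = ((j:ℕ)+l)%m then b j * (σ^(j:ℕ)) (x l)
        else if (j:ℕ)+l = ((j:ℕ)+l)%m + m then
          b j * (σ^(j:ℕ)) (x l) * (σ^(((j:ℕ)+l)%m)) d else 0) := by
  calc pmul σ d m a (pmul σ d m b x) k
      = ∑ i : Fin m, ∑ q : Fin m,
          ((if (i:ℕ) + q = (k:ℕ) then a i
            else if (i:ℕ) + q = (k:ℕ) + m then a i * (σ^(k:ℕ)) d else 0) *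
           (σ^(i:ℕ)) (pmul σ d m b x q)) := by
        refine Finset.sum_congr rfl fun i _ => Finset.sum_congr rfl fun q _ => ?_
        split_ifs <;> ring
    _ = ∑ i : Fin m, ∑ q : Fin m, ∑ j : Fin m, ∑ l : Fin m,
          ((if (i:ℕ) + q = (k:ℕ) then a i
            else if (i:ℕ) + q = (k:ℕ) + m then a i * (σ^(k:ℕ)) d else 0) *
           (σ^(i:ℕ)) (if (j:ℕ) + l = (q:ℕ) then b j * (σ^(j:ℕ)) (x l)
             else if (j:ℕ)+l = (q:ℕ) + m then
               b j * (σ^(j:ℕ)) (x l) * (σ^(q:ℕ)) d else 0)) := by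
        refine Finset.sum_congr rfl fun i _ => Finset.sum_congr rfl fun q _ => ?_
        rw [show pmul σ d m b x q = ∑ j : Fin m, ∑ l : Fin m,
          (if (j:ℕ) + l = (q:ℕ) then b j * (σ^(j:ℕ)) (x l)
            else if (j:ℕ)+l = (q:ℕ) + m then
              b j * (σ^(j:ℕ)) (x l) * (σ^(q:ℕ)) d else 0) from rfl]
        rw [map_sum, Finset.mul_sum]
        refine Finset.sum_congr rfl fun j _ => ?_
        rw [map_sum, Finset.mul_sum]
    _ = ∑ i : Fin m, ∑ j : Fin m, ∑ l : Fin m, ∑ q : Fin m,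
          ((if (i:ℕ) + q = (k:ℕ) then a i
            else if (i:ℕ) + q = (k:ℕ) + m then a i * (σ^(k:ℕ)) d else 0) *
           (σ^(i:ℕ)) (if (j:ℕ) + l = (q:ℕ) then b j * (σ^(j:ℕ)) (x l)
             else if (j:ℕ)+l = (q:ℕ) + m then
               b j * (σ^(j:ℕ)) (x l) * (σ^(q:ℕ)) d else 0)) := by
        refine Finset.sum_congr rfl fun i _ => ?_
        rw [Finset.sum_comm]
        exact Finset.sum_congr rfl fun j _ => Finset.sum_comm
    _ = _ := by
        refine Finset.sum_congr rfl fun i _ => Finset.sum_congr rfl fun j _ =>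
          Finset.sum_congr rfl fun l _ => ?_
        rw [sum_collapse' _ (((j:ℕ)+(l:ℕ)) % m) (Nat.mod_lt _ hm0) ?_]
        intro q hq
        have hW : (if (j:ℕ) + l = (q:ℕ) then b j * (σ^(j:ℕ)) (x l)
             else if (j:ℕ)+l = (q:ℕ) + m then
               b j * (σ^(j:ℕ)) (x l) * (σ^(q:ℕ)) d else 0) = 0 := by
          split_ifs with h1 h2
          · exact absurd (by rw [← h1, Nat.mod_eq_of_lt (h1 ▸ q.isLt)]) (Ne.symm hq)
          · exact absurd (by rw [h2, Nat.add_mod_right, Nat.mod_eq_of_lt q.isLt])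
              (Ne.symm hq)
          · rfl
        rw [hW, map_zero, mul_zero]

end

/-- Let `S/S₀` be cyclic Galois of degree `m` with group `⟨σ⟩`, `d ∈ Sˣ`, and
let `s` be the smallest positive integer with `d ∈ Fix(σ^s)`.  If `s ∣ m`, say `m = r·s`,
then the `S₀`-submodule `S ⊕ St^s ⊕ ⋯ ⊕ St^{(r−1)s}` (the elements supported on exponents
divisible by `s`) is contained in the right nucleus of `(S/S₀, σ, d)`. -/
theorem multiples_in_right_nucleus {S : Type*} [CommRing S]
    (σ : S ≃+* S) (m : ℕ) (hGal : CyclicGaloisExtension σ m)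
    (d : S) (hd : IsUnit d)
    (s : ℕ) (hs : 0 < s) (hds : (σ ^ s) d = d)
    (hmin : ∀ j, 0 < j → j < s → (σ ^ j) d ≠ d)
    (r : ℕ) (hm : m = r * s) :
    ∀ x : Fin m → S, (∀ i : Fin m, ¬ s ∣ (i : ℕ) → x i = 0) →
      ∀ a b : Fin m → S,
        pmul σ d m (pmul σ d m a b) x = pmul σ d m a (pmul σ d m b x) := by
  obtain ⟨hm0, hσm, -⟩ := hGal
  intro x hx a b
  funext k
  rw [lhs_expand σ d hm0 a b x k, rhs_expand σ d hm0 a b x k]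
  refine Finset.sum_congr rfl fun i _ => Finset.sum_congr rfl fun j _ =>
    Finset.sum_congr rfl fun l _ => ?_
  by_cases hsl : s ∣ (l:ℕ)
  · exact core σ hσm d hds (i:ℕ) (j:ℕ) (l:ℕ) (k:ℕ) i.isLt j.isLt l.isLt k.isLt hsl
      (a i) (b j) (x l)
  · have hx0 : x l = 0 := hx l hsl
    split_ifs <;> simp [hx0]
end
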